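/- For every point x₀ ∈ Σ₂ there exists a dense uncountable σ-invariant 1-scrambled set Y of transitive points in Σ₂ such that for every nonnegative integer m and every y ∈ Y, limsup_{n→∞} d(σⁿ(σᵐ(x₀)), σⁿ(y)) = 1 and liminf_{n→∞} d(σⁿ(σᵐ(x₀)), σⁿ(y)) = 0. -/

import Mathlib

open Filter

/-- The shift map on the space `Σ₂` of binary sequences. -/
def shift (β : ℕ → Bool) : ℕ → Bool := fun i => β (i + 1)

/-- The metric `d(β,γ) = ∑ᵢ |βᵢ - γᵢ| / 2^(i+1)` on `Σ₂`. -/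
noncomputable def d2 (β γ : ℕ → Bool) : ℝ :=
  ∑' i : ℕ, |(if β i then (1 : ℝ) else 0) - (if γ i then (1 : ℝ) else 0)| / 2 ^ (i + 1)

/-- A set is dense in `Σ₂` (with respect to the metric `d2`). -/
def Dense2 (Y : Set (ℕ → Bool)) : Prop :=
  ∀ β : ℕ → Bool, ∀ ε : ℝ, 0 < ε → ∃ y ∈ Y, d2 β y < ε

namespace ScramAux


lemma term_eq (β γ : ℕ → Bool) (i : ℕ) :
    |(if β i then (1 : ℝ) else 0) - (if γ i then (1 : ℝ) else 0)| / 2 ^ (i + 1)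
      = if β i = γ i then 0 else ((1:ℝ)/2) ^ (i + 1) := by
  cases hb : β i <;> cases hg : γ i <;> simp [div_pow]

lemma summable_geom : Summable (fun i : ℕ => ((1:ℝ)/2) ^ (i + 1)) := by
  have h := summable_geometric_of_lt_one (by norm_num : (0:ℝ) ≤ 1/2) (by norm_num : (1:ℝ)/2 < 1)
  exact (summable_nat_add_iff 1).mpr h

lemma term_nonneg (β γ : ℕ → Bool) (i : ℕ) :
    0 ≤ (if β i = γ i then (0:ℝ) else ((1:ℝ)/2) ^ (i + 1)) := by
  split
  · exact le_rfl
  · positivity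

lemma term_le (β γ : ℕ → Bool) (i : ℕ) :
    (if β i = γ i then (0:ℝ) else ((1:ℝ)/2) ^ (i + 1)) ≤ ((1:ℝ)/2) ^ (i+1) := by
  split
  · positivity
  · exact le_rfl

lemma summable_term (β γ : ℕ → Bool) :
    Summable (fun i => if β i = γ i then (0:ℝ) else ((1:ℝ)/2) ^ (i + 1)) :=
  Summable.of_nonneg_of_le (term_nonneg β γ) (term_le β γ) summable_geom

lemma d2_eq (β γ : ℕ → Bool) :
    d2 β γ = ∑' i : ℕ, (if β i = γ i then (0:ℝ) else ((1:ℝ)/2) ^ (i + 1)) := by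
  unfold d2; exact tsum_congr (term_eq β γ)

lemma tsum_geom : ∑' i : ℕ, ((1:ℝ)/2) ^ (i + 1) = 1 := by
  have h := tsum_geometric_of_lt_one (by norm_num : (0:ℝ) ≤ 1/2) (by norm_num : (1:ℝ)/2 < 1)
  have h2 : ∑' i : ℕ, ((1:ℝ)/2) ^ (i + 1) = (∑' i : ℕ, ((1:ℝ)/2) ^ i) * (1/2) := by
    rw [← tsum_mul_right]; exact tsum_congr (fun i => by rw [pow_succ])
  rw [h2, h]; norm_num

lemma d2_nonneg (β γ : ℕ → Bool) : 0 ≤ d2 β γ := by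
  rw [d2_eq]; exact tsum_nonneg (term_nonneg β γ)

lemma d2_le_one (β γ : ℕ → Bool) : d2 β γ ≤ 1 := by
  have h := Summable.tsum_le_tsum (term_le β γ) (summable_term β γ) summable_geom
  rw [tsum_geom] at h
  rw [d2_eq]; exact h

lemma d2_comm (β γ : ℕ → Bool) : d2 β γ = d2 γ β := by
  rw [d2_eq, d2_eq]
  exact tsum_congr (fun i => if_congr eq_comm rfl rfl)

lemma sum_geom_range (L : ℕ) :
    ∑ i ∈ Finset.range L, ((1:ℝ)/2) ^ (i + 1) = 1 - ((1:ℝ)/2)^L := by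
  induction L with
  | zero => simp
  | succ n ih => rw [Finset.sum_range_succ, ih]; ring

lemma tsum_le_pow {f : ℕ → ℝ} (hs : Summable f) (h0 : ∀ i, 0 ≤ f i)
    (hle : ∀ i, f i ≤ ((1:ℝ)/2)^(i+1)) {L : ℕ} (hz : ∀ i < L, f i = 0) :
    ∑' i, f i ≤ ((1:ℝ)/2)^L := by
  have key := Summable.sum_add_tsum_nat_add L hs
  have h1 : ∑ i ∈ Finset.range L, f i = 0 :=
    Finset.sum_eq_zero (fun i hi => hz i (Finset.mem_range.mp hi))
  have hsh : Summable (fun i => f (i + L)) := (summable_nat_add_iff L).mpr hs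
  have h2 : ∑' i : ℕ, f (i + L) ≤ ∑' i : ℕ, ((1:ℝ)/2) ^ (i + 1) * ((1:ℝ)/2) ^ L := by
    refine Summable.tsum_le_tsum (fun i => ?_) hsh (summable_geom.mul_right _)
    calc f (i + L) ≤ ((1:ℝ)/2)^((i+L)+1) := hle _
      _ = ((1:ℝ)/2) ^ (i + 1) * ((1:ℝ)/2) ^ L := by rw [← pow_add]; ring_nf
  have h3 : ∑' i : ℕ, ((1:ℝ)/2) ^ (i + 1) * ((1:ℝ)/2) ^ L = ((1:ℝ)/2) ^ L := by
    rw [tsum_mul_right, tsum_geom, one_mul]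
  have : ∑' i, f i = ∑' i : ℕ, f (i + L) := by rw [← key, h1, zero_add]
  rw [this]; exact le_trans h2 (le_of_eq h3)

lemma d2_le_of_agree {β γ : ℕ → Bool} {L : ℕ} (h : ∀ i < L, β i = γ i) :
    d2 β γ ≤ ((1:ℝ)/2) ^ L := by
  rw [d2_eq]
  exact tsum_le_pow (summable_term β γ) (term_nonneg β γ) (term_le β γ)
    (fun i hi => by simp [h i hi])

lemma d2_ge_of_disagree {β γ : ℕ → Bool} {L : ℕ} (h : ∀ i < L, β i ≠ γ i) :
    1 - ((1:ℝ)/2) ^ L ≤ d2 β γ := by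
  have h1 := Summable.sum_le_tsum (Finset.range L) (fun i _ => term_nonneg β γ i) (summable_term β γ)
  have h2 : ∑ i ∈ Finset.range L, (if β i = γ i then (0:ℝ) else ((1:ℝ)/2) ^ (i + 1))
      = ∑ i ∈ Finset.range L, ((1:ℝ)/2) ^ (i + 1) :=
    Finset.sum_congr rfl (fun i hi => by simp [h i (Finset.mem_range.mp hi)])
  have h3 : (1:ℝ) - ((1:ℝ)/2)^L
      = ∑ i ∈ Finset.range L, (if β i = γ i then (0:ℝ) else ((1:ℝ)/2) ^ (i + 1)) := by
    rw [h2, sum_geom_range]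
  rw [d2_eq, h3]
  exact h1

lemma d2_ge_half {β γ : ℕ → Bool} (h : β 0 ≠ γ 0) : (1:ℝ)/2 ≤ d2 β γ := by
  rw [d2_eq]
  have := Summable.le_tsum (summable_term β γ) 0 (fun j _ => term_nonneg β γ j)
  simpa [h] using this

lemma shift_iter (β : ℕ → Bool) (n i : ℕ) : shift^[n] β i = β (n + i) := by
  induction n generalizing i with
  | zero => simp
  | succ n ih =>
    have h1 : shift^[n+1] β = shift (shift^[n] β) := Function.iterate_succ_apply' shift n β
    rw [h1]
    show shift^[n] β (i+1) = β (n + 1 + i)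
    rw [ih]
    exact congrArg β (by omega)



variable {u : ℕ → ℝ}

lemma bddAbove (h1 : ∀ n, u n ≤ 1) : IsBoundedUnder (· ≤ ·) atTop u :=
  isBoundedUnder_of ⟨1, h1⟩

lemma bddBelow (h0 : ∀ n, 0 ≤ u n) : IsBoundedUnder (· ≥ ·) atTop u :=
  isBoundedUnder_of ⟨0, h0⟩

lemma limsup_ge_of_freq_ge {a : ℝ} (h1 : ∀ n, u n ≤ 1)
    (h : ∀ N, ∃ n ≥ N, a ≤ u n) : a ≤ limsup u atTop :=
  le_limsup_of_frequently_le (frequently_atTop.mpr h) (bddAbove h1)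

lemma limsup_ge_one (h1 : ∀ n, u n ≤ 1)
    (h : ∀ L : ℕ, ∀ N, ∃ n ≥ N, 1 - ((1:ℝ)/2)^L ≤ u n) : 1 ≤ limsup u atTop := by
  by_contra hc
  push_neg at hc
  obtain ⟨L, hL⟩ := exists_pow_lt_of_lt_one (by linarith : (0:ℝ) < 1 - limsup u atTop)
    (by norm_num : (1:ℝ)/2 < 1)
  have := limsup_ge_of_freq_ge h1 (h L)
  linarith
lemma limsup_le_one (h0 : ∀ n, 0 ≤ u n) (h1 : ∀ n, u n ≤ 1) : limsup u atTop ≤ 1 :=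
  limsup_le_of_le ((bddBelow h0).isCoboundedUnder_le) (Eventually.of_forall h1)

lemma limsup_eq_one (h0 : ∀ n, 0 ≤ u n) (h1 : ∀ n, u n ≤ 1)
    (h : ∀ L : ℕ, ∀ N, ∃ n ≥ N, 1 - ((1:ℝ)/2)^L ≤ u n) : limsup u atTop = 1 :=
  le_antisymm (limsup_le_one h0 h1) (limsup_ge_one h1 h)

lemma liminf_eq_zero (h0 : ∀ n, 0 ≤ u n) (h1 : ∀ n, u n ≤ 1)
    (h : ∀ L : ℕ, ∀ N, ∃ n ≥ N, u n ≤ ((1:ℝ)/2)^L) : liminf u atTop = 0 := by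
  have hge : 0 ≤ liminf u atTop :=
    le_liminf_of_le ((bddAbove h1).isCoboundedUnder_ge)
      (Eventually.of_forall h0)
  have hle : ∀ L : ℕ, liminf u atTop ≤ ((1:ℝ)/2)^L := fun L =>
    liminf_le_of_frequently_le (frequently_atTop.mpr (h L)) (bddBelow h0)
  by_contra hc
  have hpos : 0 < liminf u atTop := lt_of_le_of_ne hge (Ne.symm hc)
  obtain ⟨L, hL⟩ := exists_pow_lt_of_lt_one hpos (by norm_num : (1:ℝ)/2 < 1)
  linarith [hle L]



def bitOf (x₀ t : ℕ → Bool) (n i : ℕ) : Bool :=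
  let u := (Nat.unpair (Nat.unpair n).1).1
  let v := (Nat.unpair (Nat.unpair n).1).2
  if u = 0 then false
  else if u = 1 then true
  else if u = 2 then t v
  else if u = 3 then decide ((i / (v+1)) % 2 = 1)
  else if u = 4 then x₀ (i + v)
  else if u = 5 then x₀ (i - v)
  else if u = 6 then !x₀ (i + v)
  else if u = 7 then !x₀ (i - v)
  else Nat.testBit v (i - (4^n - 1))

def ypt (x₀ t : ℕ → Bool) (i : ℕ) : Bool := bitOf x₀ t (Nat.log 4 (i+1)) i

lemma log_eq {n i : ℕ} (h1 : 4^n - 1 ≤ i) (h2 : i < 4^(n+1) - 1) : Nat.log 4 (i+1) = n := by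
  have hp : 1 ≤ 4^n := Nat.one_le_pow n 4 (by norm_num)
  have hp' : 1 ≤ 4^(n+1) := Nat.one_le_pow _ 4 (by norm_num)
  exact Nat.log_eq_of_pow_le_of_lt_pow (by omega) (by omega)

lemma exists_block (c M L : ℕ) :
    ∃ A m, M ≤ A ∧ A = 4^m - 1 ∧ (Nat.unpair m).1 = c ∧
      ∀ i, A ≤ i → i < A + L → Nat.log 4 (i+1) = m := by
  set m := Nat.pair c (M + L + 1) with hm
  have hmb : M + L + 1 ≤ m := Nat.right_le_pair c (M + L + 1)
  have hmp : m < 4 ^ m := Nat.lt_pow_self (by norm_num)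
  refine ⟨4^m - 1, m, by omega, rfl, by simp [hm], ?_⟩
  intro i hi1 hi2
  apply log_eq hi1
  have h4 : 4^(m+1) = 4 * 4^m := by ring
  omega

lemma win0 (x₀ : ℕ → Bool) (M L : ℕ) :
    ∃ A, M ≤ A ∧ ∀ (t : ℕ → Bool) i, A ≤ i → i < A + L → ypt x₀ t i = false := by
  obtain ⟨A, m, hM, hA, hc, hlog⟩ := exists_block (Nat.pair 0 0) M L
  refine ⟨A, hM, fun t i h1 h2 => ?_⟩
  unfold ypt; rw [hlog i h1 h2]; simp [bitOf, hc]

lemma win1 (x₀ : ℕ → Bool) (M L : ℕ) :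
    ∃ A, M ≤ A ∧ ∀ (t : ℕ → Bool) i, A ≤ i → i < A + L → ypt x₀ t i = true := by
  obtain ⟨A, m, hM, hA, hc, hlog⟩ := exists_block (Nat.pair 1 0) M L
  refine ⟨A, hM, fun t i h1 h2 => ?_⟩
  unfold ypt; rw [hlog i h1 h2]; simp [bitOf, hc]

lemma win2 (x₀ : ℕ → Bool) (j M L : ℕ) :
    ∃ A, M ≤ A ∧ ∀ (t : ℕ → Bool) i, A ≤ i → i < A + L → ypt x₀ t i = t j := by
  obtain ⟨A, m, hM, hA, hc, hlog⟩ := exists_block (Nat.pair 2 j) M L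
  refine ⟨A, hM, fun t i h1 h2 => ?_⟩
  unfold ypt; rw [hlog i h1 h2]; simp [bitOf, hc]

lemma win3 (x₀ : ℕ → Bool) (r M L : ℕ) :
    ∃ A, M ≤ A ∧ ∀ (t : ℕ → Bool) i, A ≤ i → i < A + L →
      ypt x₀ t i = decide ((i / (r+1)) % 2 = 1) := by
  obtain ⟨A, m, hM, hA, hc, hlog⟩ := exists_block (Nat.pair 3 r) M L
  refine ⟨A, hM, fun t i h1 h2 => ?_⟩
  unfold ypt; rw [hlog i h1 h2]; simp [bitOf, hc]

lemma win4 (x₀ : ℕ → Bool) (v M L : ℕ) :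
    ∃ A, M ≤ A ∧ ∀ (t : ℕ → Bool) i, A ≤ i → i < A + L → ypt x₀ t i = x₀ (i + v) := by
  obtain ⟨A, m, hM, hA, hc, hlog⟩ := exists_block (Nat.pair 4 v) M L
  refine ⟨A, hM, fun t i h1 h2 => ?_⟩
  unfold ypt; rw [hlog i h1 h2]; simp [bitOf, hc]

lemma win5 (x₀ : ℕ → Bool) (v M L : ℕ) :
    ∃ A, M ≤ A ∧ ∀ (t : ℕ → Bool) i, A ≤ i → i < A + L → ypt x₀ t i = x₀ (i - v) := by
  obtain ⟨A, m, hM, hA, hc, hlog⟩ := exists_block (Nat.pair 5 v) M L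
  refine ⟨A, hM, fun t i h1 h2 => ?_⟩
  unfold ypt; rw [hlog i h1 h2]; simp [bitOf, hc]

lemma win6 (x₀ : ℕ → Bool) (v M L : ℕ) :
    ∃ A, M ≤ A ∧ ∀ (t : ℕ → Bool) i, A ≤ i → i < A + L → ypt x₀ t i = !x₀ (i + v) := by
  obtain ⟨A, m, hM, hA, hc, hlog⟩ := exists_block (Nat.pair 6 v) M L
  refine ⟨A, hM, fun t i h1 h2 => ?_⟩
  unfold ypt; rw [hlog i h1 h2]; simp [bitOf, hc]

lemma win7 (x₀ : ℕ → Bool) (v M L : ℕ) :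
    ∃ A, M ≤ A ∧ ∀ (t : ℕ → Bool) i, A ≤ i → i < A + L → ypt x₀ t i = !x₀ (i - v) := by
  obtain ⟨A, m, hM, hA, hc, hlog⟩ := exists_block (Nat.pair 7 v) M L
  refine ⟨A, hM, fun t i h1 h2 => ?_⟩
  unfold ypt; rw [hlog i h1 h2]; simp [bitOf, hc]

lemma win8 (x₀ : ℕ → Bool) (v M L : ℕ) :
    ∃ A, M ≤ A ∧ ∀ (t : ℕ → Bool) i, A ≤ i → i < A + L →
      ypt x₀ t i = Nat.testBit v (i - A) := by
  obtain ⟨A, m, hM, hA, hc, hlog⟩ := exists_block (Nat.pair 8 v) M L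
  refine ⟨A, hM, fun t i h1 h2 => ?_⟩
  unfold ypt; rw [hlog i h1 h2, hA]; simp [bitOf, hc]


/-- encode first L bits of β as a natural number -/
def enc : ℕ → (ℕ → Bool) → ℕ
  | 0, _ => 0
  | (L+1), β => Nat.bit (β 0) (enc L (fun i => β (i+1)))

lemma testBit_enc : ∀ (L : ℕ) (β : ℕ → Bool) (i : ℕ), i < L → (enc L β).testBit i = β i := by
  intro L
  induction L with
  | zero => intro β i hi; omega
  | succ L ih =>
    intro β i hi
    cases i with
    | zero => simp [enc, Nat.testBit_bit_zero]
    | succ i =>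
      rw [enc, Nat.testBit_bit_succ]
      exact ih _ i (by omega)

lemma d2_shift_le {α β : ℕ → Bool} (a b n L : ℕ)
    (h : ∀ i < L, α (n + a + i) = β (n + b + i)) :
    d2 (shift^[n] (shift^[a] α)) (shift^[n] (shift^[b] β)) ≤ ((1:ℝ)/2)^L := by
  apply d2_le_of_agree
  intro i hi
  rw [← Function.iterate_add_apply, ← Function.iterate_add_apply, shift_iter, shift_iter]
  exact h i hi

lemma d2_shift_ge {α β : ℕ → Bool} (a b n L : ℕ)
    (h : ∀ i < L, α (n + a + i) ≠ β (n + b + i)) :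
    1 - ((1:ℝ)/2)^L ≤ d2 (shift^[n] (shift^[a] α)) (shift^[n] (shift^[b] β)) := by
  apply d2_ge_of_disagree
  intro i hi
  rw [← Function.iterate_add_apply, ← Function.iterate_add_apply, shift_iter, shift_iter]
  exact h i hi

lemma parity_ne (b : ℕ) : decide ((b+1)%2=1) ≠ decide (b%2=1) := by
  by_cases hb : b % 2 = 1
  · have h2 : (b+1)%2 = 0 := by omega
    simp [hb, h2]
  · have h2 : (b+1)%2 = 1 := by omega
    simp [hb, h2]

/-- agreement windows: all points of Y agree (value false) on long windows -/
lemma freq_agree (x₀ t s : ℕ → Bool) (k j L N : ℕ) :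
    ∃ n ≥ N, ∀ i < L, ypt x₀ t (n + k + i) = false ∧ ypt x₀ s (n + j + i) = false := by
  obtain ⟨A, hM, hw⟩ := win0 x₀ N (k + j + L)
  refine ⟨A, hM, fun i hi => ⟨hw t _ (by omega) (by omega), hw s _ (by omega) (by omega)⟩⟩

/-- disagreement windows via constant-parameter blocks, same shift -/
lemma freq_cst (x₀ t s : ℕ → Bool) (j₀ k L N : ℕ) (hts : t j₀ ≠ s j₀) :
    ∃ n ≥ N, ∀ i < L, ypt x₀ t (n + k + i) ≠ ypt x₀ s (n + k + i) := by
  obtain ⟨A, hM, hw⟩ := win2 x₀ j₀ N (k + L)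
  refine ⟨A, hM, fun i hi => ?_⟩
  rw [hw t _ (by omega) (by omega), hw s _ (by omega) (by omega)]
  exact hts

/-- disagreement windows via alternating blocks, different shifts -/
lemma freq_alt (x₀ t s : ℕ → Bool) (k j L N : ℕ) (hkj : k < j) :
    ∃ n ≥ N, ∀ i < L, ypt x₀ t (n + k + i) ≠ ypt x₀ s (n + j + i) := by
  set r := j - k with hr
  have hr0 : 0 < r := by omega
  obtain ⟨A, hM, hw⟩ := win3 x₀ (r - 1) N (j + L)
  refine ⟨A, hM, fun i hi => ?_⟩
  rw [hw t _ (by omega) (by omega), hw s _ (by omega) (by omega)]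
  have h1 : r - 1 + 1 = r := by omega
  have h2 : A + j + i = (A + k + i) + r := by omega
  rw [h1, h2, Nat.add_div_right _ hr0]
  exact (parity_ne _).symm

/-- windows where Y-points copy x₀ with the exact offset needed -/
lemma freq_syn (x₀ : ℕ → Bool) (m k L N : ℕ) :
    ∃ n ≥ N, ∀ (t : ℕ → Bool), ∀ i < L, ypt x₀ t (n + k + i) = x₀ (n + m + i) := by
  rcases le_or_gt k m with hkm | hkm
  · obtain ⟨A, hM, hw⟩ := win4 x₀ (m - k) N (k + L)
    refine ⟨A, hM, fun t i hi => ?_⟩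
    rw [hw t _ (by omega) (by omega)]
    exact congrArg x₀ (by omega)
  · obtain ⟨A, hM, hw⟩ := win5 x₀ (k - m) N (k + L)
    refine ⟨A, hM, fun t i hi => ?_⟩
    rw [hw t _ (by omega) (by omega)]
    exact congrArg x₀ (by omega)

/-- windows where Y-points anti-copy x₀ with the exact offset needed -/
lemma freq_asyn (x₀ : ℕ → Bool) (m k L N : ℕ) :
    ∃ n ≥ N, ∀ (t : ℕ → Bool), ∀ i < L, ypt x₀ t (n + k + i) = !x₀ (n + m + i) := by
  rcases le_or_gt k m with hkm | hkm
  · obtain ⟨A, hM, hw⟩ := win6 x₀ (m - k) N (k + L)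
    refine ⟨A, hM, fun t i hi => ?_⟩
    rw [hw t _ (by omega) (by omega)]
    exact congrArg (fun z => !x₀ z) (by omega)
  · obtain ⟨A, hM, hw⟩ := win7 x₀ (k - m) N (k + L)
    refine ⟨A, hM, fun t i hi => ?_⟩
    rw [hw t _ (by omega) (by omega)]
    exact congrArg (fun z => !x₀ z) (by omega)

/-- word windows: members of the orbit approximate any β -/
lemma freq_word (x₀ β : ℕ → Bool) (k L : ℕ) :
    ∃ n : ℕ, ∀ (t : ℕ → Bool), ∀ i < L, ypt x₀ t (n + k + i) = β i := by
  obtain ⟨A, hM, hw⟩ := win8 x₀ (enc L β) k L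
  refine ⟨A - k, fun t i hi => ?_⟩
  have hAk : A - k + k = A := by omega
  rw [hAk]
  rw [hw t _ (by omega) (by omega)]
  have : A + i - A = i := by omega
  rw [this, testBit_enc L β i hi]

lemma periodic_ext {p : ℕ → Bool} {q : ℕ} (hp : shift^[q] p = p) :
    ∀ (a i : ℕ), p (i + a * q) = p i := by
  intro a
  induction a with
  | zero => simp
  | succ a ih =>
    intro i
    have h1 : i + (a+1) * q = q + (i + a * q) := by ring
    rw [h1]
    have h2 : p (q + (i + a * q)) = shift^[q] p (i + a * q) := (shift_iter p q _).symm
    rw [h2, hp, ih]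

end ScramAux

open ScramAux

/-- For every point `x₀ ∈ Σ₂` there exists a dense uncountable shift-invariant
1-scrambled set `Y` of transitive points such that for every `m ≥ 0` and every
`y ∈ Y`, `limsup d(σⁿ(σᵐx₀), σⁿy) = 1` and `liminf d(σⁿ(σᵐx₀), σⁿy) = 0`. -/
theorem shift_scrambled_set_catching_up_with_orbit (x₀ : ℕ → Bool) :
    ∃ Y : Set (ℕ → Bool),
      Dense2 Y ∧
      ¬ Y.Countable ∧
      shift '' Y ⊆ Y ∧
      (∀ y ∈ Y, Dense2 (Set.range fun n => shift^[n] y)) ∧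
      (∀ x ∈ Y, ∀ y ∈ Y, x ≠ y →
        1 ≤ limsup (fun n => d2 (shift^[n] x) (shift^[n] y)) atTop ∧
        liminf (fun n => d2 (shift^[n] x) (shift^[n] y)) atTop = 0) ∧
      (∀ x ∈ Y, ∀ p : ℕ → Bool, (∃ k : ℕ, 0 < k ∧ shift^[k] p = p) →
        (1 : ℝ) / 2 ≤ limsup (fun n => d2 (shift^[n] x) (shift^[n] p)) atTop) ∧
      (∀ m : ℕ, ∀ y ∈ Y,
        limsup (fun n => d2 (shift^[n] (shift^[m] x₀)) (shift^[n] y)) atTop = 1 ∧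
        liminf (fun n => d2 (shift^[n] (shift^[m] x₀)) (shift^[n] y)) atTop = 0) := by
  classical
  refine ⟨{y | ∃ k t, y = shift^[k] (ypt x₀ t)}, ?dense, ?unc, ?inv, ?trans, ?pair, ?per, ?orbit⟩
  case dense =>
    intro β ε hε
    obtain ⟨L, hL⟩ := exists_pow_lt_of_lt_one hε (by norm_num : (1:ℝ)/2 < 1)
    obtain ⟨n, hn⟩ := freq_word x₀ β 0 L
    refine ⟨shift^[n + 0] (ypt x₀ (fun _ => false)), ⟨n + 0, _, rfl⟩, ?_⟩
    have hagree : ∀ i < L, β i = shift^[n + 0] (ypt x₀ (fun _ => false)) i := by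
      intro i hi
      rw [shift_iter]
      exact (hn _ i hi).symm
    calc d2 β (shift^[n + 0] (ypt x₀ (fun _ => false))) ≤ ((1:ℝ)/2)^L :=
          d2_le_of_agree hagree
      _ < ε := hL
  case unc =>
    intro hcount
    have hinj : Function.Injective (fun t => ypt x₀ t) := by
      intro t s hts
      have hts' : ypt x₀ t = ypt x₀ s := hts
      by_contra hne
      have : ∃ j, t j ≠ s j := by
        by_contra hall; push_neg at hall; exact hne (funext hall)
      obtain ⟨j, hj⟩ := this
      obtain ⟨A, _, hw⟩ := win2 x₀ j 0 1
      have h1 : ypt x₀ t A = t j := hw t A (le_refl A) (by omega)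
      have h2 : ypt x₀ s A = s j := hw s A (le_refl A) (by omega)
      rw [hts'] at h1
      exact hj (h1.symm.trans h2)
    have hsub : Set.range (fun t => ypt x₀ t) ⊆ {y | ∃ k t, y = shift^[k] (ypt x₀ t)} := by
      rintro _ ⟨t, rfl⟩; exact ⟨0, t, rfl⟩
    have hc2 : (Set.range (fun t => ypt x₀ t)).Countable := hcount.mono hsub
    have : Countable (ℕ → Bool) := by
      have hct := hc2.to_subtype
      have hinj2 : Function.Injective
          (fun t : ℕ → Bool => (⟨ypt x₀ t, Set.mem_range_self t⟩ :
            ↥(Set.range (fun t => ypt x₀ t)))) := by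
        intro t s h
        have h' := congrArg Subtype.val h
        simp only at h'
        exact hinj h'
      exact Function.Injective.countable hinj2
    -- contradiction with uncountability of ℕ → Bool
    have e : (ℕ → Bool) ≃ Set ℕ :=
      { toFun := fun f => {n | f n}
        invFun := fun s => fun n => @decide (n ∈ s) (Classical.dec _)
        left_inv := fun f => by funext n; simp [Set.mem_setOf_eq]
        right_inv := fun s => by ext n; simp [Set.mem_setOf_eq] }
    have : Countable (Set ℕ) := Countable.of_equiv _ e
    obtain ⟨g, hg⟩ := (exists_injective_nat (Set ℕ))
    exact Function.cantor_surjective (Function.invFun g) (Function.invFun_surjective hg)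
  case inv =>
    rintro _ ⟨y, ⟨k, t, rfl⟩, rfl⟩
    exact ⟨k + 1, t, (Function.iterate_succ_apply' shift k (ypt x₀ t)).symm⟩
  case trans =>
    rintro y ⟨k, t, rfl⟩ β ε hε
    obtain ⟨L, hL⟩ := exists_pow_lt_of_lt_one hε (by norm_num : (1:ℝ)/2 < 1)
    obtain ⟨n, hn⟩ := freq_word x₀ β k L
    refine ⟨shift^[n] (shift^[k] (ypt x₀ t)), ⟨n, rfl⟩, ?_⟩
    have hagree : ∀ i < L, β i = shift^[n] (shift^[k] (ypt x₀ t)) i := by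
      intro i hi
      rw [← Function.iterate_add_apply, shift_iter]
      exact (hn t i hi).symm
    calc d2 β (shift^[n] (shift^[k] (ypt x₀ t))) ≤ ((1:ℝ)/2)^L := d2_le_of_agree hagree
      _ < ε := hL
  case pair =>
    rintro x ⟨k, t, rfl⟩ y ⟨j, s, rfl⟩ hxy
    constructor
    · -- limsup ≥ 1
      apply limsup_ge_one (fun n => d2_le_one _ _)
      intro L N
      rcases Nat.lt_trichotomy k j with hkj | hkj | hkj
      · obtain ⟨n, hnN, hn⟩ := freq_alt x₀ t s k j L N hkj
        refine ⟨n, hnN, ?_⟩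
        exact d2_shift_ge k j n L hn
      · subst hkj
        have hts : ∃ j₀, t j₀ ≠ s j₀ := by
          by_contra hall; push_neg at hall
          exact hxy (by rw [funext hall])
        obtain ⟨j₀, hj₀⟩ := hts
        obtain ⟨n, hnN, hn⟩ := freq_cst x₀ t s j₀ k L N hj₀
        exact ⟨n, hnN, d2_shift_ge k k n L hn⟩
      · obtain ⟨n, hnN, hn⟩ := freq_alt x₀ s t j k L N hkj
        refine ⟨n, hnN, ?_⟩
        have := d2_shift_ge j k n L hn
        rw [d2_comm] at this
        exact this
    · -- liminf = 0
      apply liminf_eq_zero (fun n => d2_nonneg _ _) (fun n => d2_le_one _ _)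
      intro L N
      obtain ⟨n, hnN, hn⟩ := freq_agree x₀ t s k j L N
      refine ⟨n, hnN, d2_shift_le k j n L (fun i hi => ?_)⟩
      rw [(hn i hi).1, (hn i hi).2]
  case per =>
    rintro x ⟨k, t, rfl⟩ p ⟨q, hq, hperiod⟩
    have pper := periodic_ext hperiod
    apply limsup_ge_of_freq_ge (fun n => d2_le_one _ _)
    intro N
    by_cases hp0 : ∀ i, p i = false
    · obtain ⟨A, hM, hw⟩ := win1 x₀ N (k + 1)
      refine ⟨A, hM, ?_⟩
      apply d2_ge_half
      rw [← Function.iterate_add_apply, shift_iter, shift_iter]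
      rw [hw t (A + k + 0) (by omega) (by omega), hp0 (A + 0)]
      simp
    · push_neg at hp0
      obtain ⟨i₀, hi₀⟩ := hp0
      have hi₀' : p i₀ = true := by
        cases h : p i₀
        · exact absurd h hi₀
        · rfl
      obtain ⟨A, hM, hw⟩ := win0 x₀ N (k + q + i₀ + 1)
      set n := i₀ + (A / q + 1) * q with hn
      have hdm : q * (A / q) + A % q = A := Nat.div_add_mod A q
      have hmq : A % q < q := Nat.mod_lt A hq
      have hexp : (A / q + 1) * q = q * (A / q) + q := by ring
      have hnA : A < n ∧ n ≤ A + q + i₀ := by constructor <;> omega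
      refine ⟨n, by omega, ?_⟩
      apply d2_ge_half
      rw [← Function.iterate_add_apply, shift_iter, shift_iter]
      rw [hw t (n + k + 0) (by omega) (by omega)]
      have hpn : p (n + 0) = true := by
        have : n + 0 = i₀ + (A / q + 1) * q := by omega
        rw [this, pper (A / q + 1) i₀, hi₀']
      rw [hpn]
      simp
  case orbit =>
    rintro m y ⟨k, t, rfl⟩
    constructor
    · apply limsup_eq_one (fun n => d2_nonneg _ _) (fun n => d2_le_one _ _)
      intro L N
      obtain ⟨n, hnN, hn⟩ := freq_asyn x₀ m k L N
      refine ⟨n, hnN, d2_shift_ge m k n L (fun i hi => ?_)⟩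
      rw [hn t i hi]
      simp
    · apply liminf_eq_zero (fun n => d2_nonneg _ _) (fun n => d2_le_one _ _)
      intro L N
      obtain ⟨n, hnN, hn⟩ := freq_syn x₀ m k L N
      refine ⟨n, hnN, d2_shift_le m k n L (fun i hi => (hn t i hi).symm)⟩
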